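/- The mean LCS function is concave: for all p, q ∈ (−1,1), γ_k((p+q)/2) ≥ (γ_k(p) + γ_k(q))/2, where γ_k(p) := lim_{n→∞} E|LCS(X_1…X_{n−np}; Y_1…Y_{n+np})|/n (the limit existing by superadditivity). -/

import Mathlib

open MeasureTheory ProbabilityTheory Filter List

set_option linter.unusedSectionVars false
set_option linter.unusedVariables false

/-- Length of a longest common subsequence of two lists. -/
noncomputable def lcsLen {α : Type*} (x y : List α) : ℕ :=
  sSup {n | ∃ z : List α, z.length = n ∧ z.Sublist x ∧ z.Sublist y}

lemma lcs_bdd {α : Type*} (x y : List α) :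
    BddAbove {n | ∃ z : List α, z.length = n ∧ z.Sublist x ∧ z.Sublist y} :=
  ⟨x.length, fun n ⟨z, hz, hx, _⟩ => hz ▸ hx.length_le⟩

lemma lcs_ne {α : Type*} (x y : List α) :
    Set.Nonempty {n | ∃ z : List α, z.length = n ∧ z.Sublist x ∧ z.Sublist y} :=
  ⟨0, [], rfl, nil_sublist _, nil_sublist _⟩

lemma exists_lcs {α : Type*} (x y : List α) :
    ∃ z : List α, z.length = lcsLen x y ∧ z.Sublist x ∧ z.Sublist y :=
  Nat.sSup_mem (lcs_ne x y) (lcs_bdd x y)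

lemma le_lcsLen {α : Type*} {x y z : List α} (hx : z.Sublist x) (hy : z.Sublist y) :
    z.length ≤ lcsLen x y :=
  le_csSup (lcs_bdd x y) ⟨z, rfl, hx, hy⟩

lemma lcsLen_mono {α : Type*} {x y x' y' : List α} (hx : x.Sublist x') (hy : y.Sublist y') :
    lcsLen x y ≤ lcsLen x' y' := by
  obtain ⟨z, hz, h1, h2⟩ := exists_lcs x y
  exact hz ▸ le_lcsLen (h1.trans hx) (h2.trans hy)

lemma lcsLen_superadd {α : Type*} (x y x' y' : List α) :
    lcsLen x y + lcsLen x' y' ≤ lcsLen (x ++ x') (y ++ y') := by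
  obtain ⟨z, hz, h1, h2⟩ := exists_lcs x y
  obtain ⟨w, hw, h3, h4⟩ := exists_lcs x' y'
  have := le_lcsLen (Sublist.append h1 h3) (Sublist.append h2 h4)
  simpa [hz, hw] using this

/-- Expected LCS length of the first `a` letters of `X` and the first `b` letters of `Y`. -/
noncomputable def expLCS {Ω : Type*} [MeasurableSpace Ω] (μ : MeasureTheory.Measure Ω) {k : ℕ}
    (X Y : ℕ → Ω → Fin k) (a b : ℕ) : ℝ :=
  ∫ ω, (lcsLen (List.ofFn fun i : Fin a => X i ω) (List.ofFn fun j : Fin b => Y j ω) : ℝ) ∂μ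

/-- The index map putting the window `[a, a+a')` of the first sequence and `[b, b+b')` of the
second sequence into one tuple. -/
def Jmap (a b a' b' : ℕ) : Fin (a' + b') → ℕ ⊕ ℕ :=
  fun t => if (t : ℕ) < a' then Sum.inl (a + t) else Sum.inr (b + ((t : ℕ) - a'))

lemma Jmap_inj (a b a' b' : ℕ) : Function.Injective (Jmap a b a' b') := by
  intro t s h
  have ht := t.isLt
  have hs := s.isLt
  by_cases h1 : (t : ℕ) < a' <;> by_cases h2 : (s : ℕ) < a' <;>
    simp only [Jmap, h1, h2, if_true, if_false, Sum.inl.injEq, Sum.inr.injEq,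
      reduceCtorEq] at h <;>
    exact Fin.ext (by omega)

/-- The LCS functional on tuples. -/
noncomputable def lcsF {k : ℕ} (a' b' : ℕ) : (Fin (a' + b') → Fin k) → ℝ :=
  fun v => (lcsLen (List.ofFn fun i : Fin a' => v (Fin.castAdd b' i))
    (List.ofFn fun j : Fin b' => v (Fin.natAdd a' j)) : ℝ)

lemma lcsF_eval {Ω : Type*} {k : ℕ} (Z : ℕ ⊕ ℕ → Ω → Fin k) (a b a' b' : ℕ) (ω : Ω) :
    lcsF a' b' (fun t => Z (Jmap a b a' b' t) ω)
      = (lcsLen (List.ofFn fun i : Fin a' => Z (Sum.inl (a + i)) ω)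
          (List.ofFn fun j : Fin b' => Z (Sum.inr (b + j)) ω) : ℝ) := by
  unfold lcsF
  have e1 : (fun i : Fin a' => Z (Jmap a b a' b' (Fin.castAdd b' i)) ω)
      = fun i : Fin a' => Z (Sum.inl (a + i)) ω := by
    funext i
    simp [Jmap, i.isLt]
  have e2 : (fun j : Fin b' => Z (Jmap a b a' b' (Fin.natAdd a' j)) ω)
      = fun j : Fin b' => Z (Sum.inr (b + j)) ω := by
    funext j
    simp [Jmap]
  rw [e1, e2]

section Prob
variable {Ω : Type*} [MeasurableSpace Ω] (μ : Measure Ω) [IsProbabilityMeasure μ] {k : ℕ}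
  (Z : ℕ ⊕ ℕ → Ω → Fin k) (hmeas : ∀ i, Measurable (Z i))
  (hindep : iIndepFun Z μ)
  (hunif : ∀ i c, μ {ω | Z i ω = c} = (k : ENNReal)⁻¹)

include hmeas hindep hunif

lemma tuple_law {m : ℕ} (J : Fin m → ℕ ⊕ ℕ) (hJ : Function.Injective J)
    (v : Fin m → Fin k) :
    μ {ω | ∀ t, Z (J t) ω = v t} = (k : ENNReal)⁻¹ ^ m := by
  rcases Nat.eq_zero_or_pos m with rfl | hm
  · have : {ω : Ω | ∀ t : Fin 0, Z (J t) ω = v t} = Set.univ := by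
      ext ω; simp
    simp [this]
  · haveI : Nonempty (Fin m) := ⟨⟨0, hm⟩⟩
    set u := Function.invFun J with hu_def
    have hu : ∀ t, u (J t) = t := Function.leftInverse_invFun hJ
    have hset : {ω | ∀ t, Z (J t) ω = v t}
        = ⋂ i ∈ Finset.image J Finset.univ, (Z i) ⁻¹' {v (u i)} := by
      ext ω
      simp only [Set.mem_setOf_eq, Set.mem_iInter, Finset.mem_image, Set.mem_preimage,
        Set.mem_singleton_iff, Finset.mem_univ, true_and]
      constructor
      · rintro h i ⟨t, rfl⟩; rw [hu]; exact h t
      · intro h t; have := h (J t) ⟨t, rfl⟩; rwa [hu] at this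
    rw [hset, hindep.meas_biInter (fun i _ => ⟨{v (u i)}, measurableSet_singleton _, rfl⟩),
      Finset.prod_image (fun t _ s _ h => hJ h)]
    have : ∀ t : Fin m, μ ((Z (J t)) ⁻¹' {v (u (J t))}) = (k : ENNReal)⁻¹ := by
      intro t; rw [hu]; exact hunif (J t) (v t)
    rw [Finset.prod_congr rfl (fun t _ => this t)]
    simp

lemma integral_tuple {m : ℕ} (J : Fin m → ℕ ⊕ ℕ) (hJ : Function.Injective J)
    (F : (Fin m → Fin k) → ℝ) :
    ∫ ω, F (fun t => Z (J t) ω) ∂μ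
      = ∑ v : Fin m → Fin k, ((k : ENNReal)⁻¹ ^ m).toReal * F v := by
  set W : Ω → (Fin m → Fin k) := fun ω t => Z (J t) ω with hW_def
  have hW : Measurable W := measurable_pi_lambda _ (fun t => hmeas (J t))
  have hF : Measurable F := measurable_of_countable F
  haveI : IsProbabilityMeasure (μ.map W) := Measure.isProbabilityMeasure_map hW.aemeasurable
  rw [show (∫ ω, F (fun t => Z (J t) ω) ∂μ) = ∫ ω, F (W ω) ∂μ from rfl,
    ← integral_map hW.aemeasurable hF.aestronglyMeasurable,
    integral_fintype .of_finite]
  refine Finset.sum_congr rfl fun v _ => ?_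
  have hpre : W ⁻¹' {v} = {ω | ∀ t, Z (J t) ω = v t} := by
    ext ω
    simp only [Set.mem_preimage, Set.mem_singleton_iff, Set.mem_setOf_eq, funext_iff]
    exact Iff.rfl
  rw [Measure.real, Measure.map_apply hW (measurableSet_singleton v), hpre,
    tuple_law μ Z hmeas hindep hunif J hJ v, smul_eq_mul]

lemma integrable_tuple {m : ℕ} (J : Fin m → ℕ ⊕ ℕ) (F : (Fin m → Fin k) → ℝ) :
    Integrable (fun ω => F (fun t => Z (J t) ω)) μ := by
  set W : Ω → (Fin m → Fin k) := fun ω t => Z (J t) ω with hW_def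
  have hW : Measurable W := measurable_pi_lambda _ (fun t => hmeas (J t))
  haveI : IsProbabilityMeasure (μ.map W) := Measure.isProbabilityMeasure_map hW.aemeasurable
  exact (integrable_map_measure (measurable_of_countable F).aestronglyMeasurable
    hW.aemeasurable).mp .of_finite

lemma integrable_lcs (a b a' b' : ℕ) :
    Integrable (fun ω => (lcsLen (List.ofFn fun i : Fin a' => Z (Sum.inl (a + i)) ω)
      (List.ofFn fun j : Fin b' => Z (Sum.inr (b + j)) ω) : ℝ)) μ := by
  have h := integrable_tuple μ Z hmeas hindep hunif (Jmap a b a' b') (lcsF a' b')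
  simpa only [lcsF_eval] using h

lemma integrable_lcs0 (a' b' : ℕ) :
    Integrable (fun ω => (lcsLen (List.ofFn fun i : Fin a' => Z (Sum.inl i) ω)
      (List.ofFn fun j : Fin b' => Z (Sum.inr j) ω) : ℝ)) μ := by
  have h := integrable_lcs μ Z hmeas hindep hunif 0 0 a' b'
  simpa only [Nat.zero_add] using h

lemma shifted_integral (a b a' b' : ℕ) :
    ∫ ω, (lcsLen (List.ofFn fun i : Fin a' => Z (Sum.inl (a + i)) ω)
        (List.ofFn fun j : Fin b' => Z (Sum.inr (b + j)) ω) : ℝ) ∂μ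
      = ∫ ω, (lcsLen (List.ofFn fun i : Fin a' => Z (Sum.inl i) ω)
        (List.ofFn fun j : Fin b' => Z (Sum.inr j) ω) : ℝ) ∂μ := by
  have h1 := integral_tuple μ Z hmeas hindep hunif (Jmap a b a' b') (Jmap_inj a b a' b')
    (lcsF a' b')
  have h2 := integral_tuple μ Z hmeas hindep hunif (Jmap 0 0 a' b') (Jmap_inj 0 0 a' b')
    (lcsF a' b')
  simp only [lcsF_eval, Nat.zero_add] at h1 h2
  rw [h1, h2]

lemma expLCS_superadd (a b a' b' : ℕ) :
    expLCS μ (fun i => Z (Sum.inl i)) (fun j => Z (Sum.inr j)) a b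
      + expLCS μ (fun i => Z (Sum.inl i)) (fun j => Z (Sum.inr j)) a' b'
    ≤ expLCS μ (fun i => Z (Sum.inl i)) (fun j => Z (Sum.inr j)) (a + a') (b + b') := by
  have i1 := integrable_lcs0 μ Z hmeas hindep hunif a b
  have i2 := integrable_lcs μ Z hmeas hindep hunif a b a' b'
  have i3 := integrable_lcs0 μ Z hmeas hindep hunif (a + a') (b + b')
  unfold expLCS
  rw [show (∫ ω, (lcsLen (List.ofFn fun i : Fin a' => Z (Sum.inl i) ω)
      (List.ofFn fun j : Fin b' => Z (Sum.inr j) ω) : ℝ) ∂μ)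
    = ∫ ω, (lcsLen (List.ofFn fun i : Fin a' => Z (Sum.inl (a + i)) ω)
      (List.ofFn fun j : Fin b' => Z (Sum.inr (b + j)) ω) : ℝ) ∂μ
    from (shifted_integral μ Z hmeas hindep hunif a b a' b').symm]
  rw [← integral_add i1 i2]
  refine integral_mono (i1.add i2) i3 fun ω => ?_
  have key : lcsLen (List.ofFn fun i : Fin a => Z (Sum.inl i) ω)
        (List.ofFn fun j : Fin b => Z (Sum.inr j) ω)
      + lcsLen (List.ofFn fun i : Fin a' => Z (Sum.inl (a + i)) ω)
        (List.ofFn fun j : Fin b' => Z (Sum.inr (b + j)) ω)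
      ≤ lcsLen (List.ofFn fun i : Fin (a + a') => Z (Sum.inl i) ω)
        (List.ofFn fun j : Fin (b + b') => Z (Sum.inr j) ω) := by
    rw [List.ofFn_add (f := fun i : Fin (a + a') => Z (Sum.inl i) ω),
      List.ofFn_add (f := fun j : Fin (b + b') => Z (Sum.inr j) ω)]
    simp only [Fin.coe_castAdd, Fin.coe_castLE, Fin.coe_natAdd]
    exact lcsLen_superadd _ _ _ _
  exact_mod_cast key

lemma expLCS_mono {a b a' b' : ℕ} (ha : a ≤ a') (hb : b ≤ b') :
    expLCS μ (fun i => Z (Sum.inl i)) (fun j => Z (Sum.inr j)) a b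
      ≤ expLCS μ (fun i => Z (Sum.inl i)) (fun j => Z (Sum.inr j)) a' b' := by
  obtain ⟨c, rfl⟩ := Nat.exists_eq_add_of_le ha
  obtain ⟨d, rfl⟩ := Nat.exists_eq_add_of_le hb
  have i1 := integrable_lcs0 μ Z hmeas hindep hunif a b
  have i3 := integrable_lcs0 μ Z hmeas hindep hunif (a + c) (b + d)
  unfold expLCS
  refine integral_mono i1 i3 fun ω => ?_
  have key : lcsLen (List.ofFn fun i : Fin a => Z (Sum.inl i) ω)
        (List.ofFn fun j : Fin b => Z (Sum.inr j) ω)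
      ≤ lcsLen (List.ofFn fun i : Fin (a + c) => Z (Sum.inl i) ω)
        (List.ofFn fun j : Fin (b + d) => Z (Sum.inr j) ω) := by
    rw [List.ofFn_add (f := fun i : Fin (a + c) => Z (Sum.inl i) ω),
      List.ofFn_add (f := fun j : Fin (b + d) => Z (Sum.inr j) ω)]
    simp only [Fin.coe_castAdd, Fin.coe_castLE, Fin.coe_natAdd]
    exact lcsLen_mono (List.sublist_append_left _ _) (List.sublist_append_left _ _)
  exact Nat.cast_le.mpr key

end Prob

/-- The mean LCS function `γ_k` is midpoint concave on `(-1,1)`. -/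
theorem meanLCS_concave {Ω : Type*} [MeasurableSpace Ω] (μ : Measure Ω)
    [IsProbabilityMeasure μ] (k : ℕ) (hk : 0 < k)
    (Z : ℕ ⊕ ℕ → Ω → Fin k) (hmeas : ∀ i, Measurable (Z i))
    (hindep : iIndepFun Z μ)
    (hunif : ∀ i c, μ {ω | Z i ω = c} = (k : ENNReal)⁻¹)
    (g : ℝ → ℝ)
    (hg : ∀ p ∈ Set.Ioo (-1 : ℝ) 1,
      Tendsto (fun n : ℕ =>
          expLCS μ (fun i => Z (Sum.inl i)) (fun j => Z (Sum.inr j))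
            ⌊(n : ℝ) * (1 - p)⌋₊ ⌊(n : ℝ) * (1 + p)⌋₊ / n)
        atTop (nhds (g p))) :
    ∀ p ∈ Set.Ioo (-1 : ℝ) 1, ∀ q ∈ Set.Ioo (-1 : ℝ) 1,
      (g p + g q) / 2 ≤ g ((p + q) / 2) := by
  intro p hp q hq
  obtain ⟨hp1, hp2⟩ := hp
  obtain ⟨hq1, hq2⟩ := hq
  set r : ℝ := (p + q) / 2 with hr_def
  have hr : r ∈ Set.Ioo (-1 : ℝ) 1 := ⟨by rw [hr_def]; linarith, by rw [hr_def]; linarith⟩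
  set e : ℕ → ℕ → ℝ := expLCS μ (fun i => Z (Sum.inl i)) (fun j => Z (Sum.inr j)) with he
  have key : ∀ n : ℕ, e ⌊(n : ℝ) * (1 - p)⌋₊ ⌊(n : ℝ) * (1 + p)⌋₊
      + e ⌊(n : ℝ) * (1 - q)⌋₊ ⌊(n : ℝ) * (1 + q)⌋₊
      ≤ e ⌊((2 * n : ℕ) : ℝ) * (1 - r)⌋₊ ⌊((2 * n : ℕ) : ℝ) * (1 + r)⌋₊ := by
    intro n
    have hn0 : (0 : ℝ) ≤ (n : ℝ) := Nat.cast_nonneg n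
    have heq1 : ((2 * n : ℕ) : ℝ) * (1 - r) = (n : ℝ) * (1 - p) + (n : ℝ) * (1 - q) := by
      rw [hr_def]; push_cast; ring
    have heq2 : ((2 * n : ℕ) : ℝ) * (1 + r) = (n : ℝ) * (1 + p) + (n : ℝ) * (1 + q) := by
      rw [hr_def]; push_cast; ring
    have hA : ⌊(n : ℝ) * (1 - p)⌋₊ + ⌊(n : ℝ) * (1 - q)⌋₊
        ≤ ⌊((2 * n : ℕ) : ℝ) * (1 - r)⌋₊ := by
      apply Nat.le_floor
      rw [heq1]
      push_cast
      have h1 := Nat.floor_le (show (0 : ℝ) ≤ (n : ℝ) * (1 - p) by nlinarith)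
      have h2 := Nat.floor_le (show (0 : ℝ) ≤ (n : ℝ) * (1 - q) by nlinarith)
      linarith
    have hC : ⌊(n : ℝ) * (1 + p)⌋₊ + ⌊(n : ℝ) * (1 + q)⌋₊
        ≤ ⌊((2 * n : ℕ) : ℝ) * (1 + r)⌋₊ := by
      apply Nat.le_floor
      rw [heq2]
      push_cast
      have h1 := Nat.floor_le (show (0 : ℝ) ≤ (n : ℝ) * (1 + p) by nlinarith)
      have h2 := Nat.floor_le (show (0 : ℝ) ≤ (n : ℝ) * (1 + q) by nlinarith)
      linarith
    calc e ⌊(n : ℝ) * (1 - p)⌋₊ ⌊(n : ℝ) * (1 + p)⌋₊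
          + e ⌊(n : ℝ) * (1 - q)⌋₊ ⌊(n : ℝ) * (1 + q)⌋₊
        ≤ e (⌊(n : ℝ) * (1 - p)⌋₊ + ⌊(n : ℝ) * (1 - q)⌋₊)
            (⌊(n : ℝ) * (1 + p)⌋₊ + ⌊(n : ℝ) * (1 + q)⌋₊) :=
          expLCS_superadd μ Z hmeas hindep hunif _ _ _ _
      _ ≤ e ⌊((2 * n : ℕ) : ℝ) * (1 - r)⌋₊ ⌊((2 * n : ℕ) : ℝ) * (1 + r)⌋₊ :=
          expLCS_mono μ Z hmeas hindep hunif hA hC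
  have h2n : Tendsto (fun n : ℕ => 2 * n) atTop atTop :=
    tendsto_atTop_atTop.mpr fun b => ⟨b, fun a ha => by omega⟩
  have hgr : Tendsto (fun n : ℕ =>
      e ⌊((2 * n : ℕ) : ℝ) * (1 - r)⌋₊ ⌊((2 * n : ℕ) : ℝ) * (1 + r)⌋₊ / ((2 * n : ℕ) : ℝ))
      atTop (nhds (g r)) := (hg r hr).comp h2n
  have hpq : Tendsto (fun n : ℕ =>
      (e ⌊(n : ℝ) * (1 - p)⌋₊ ⌊(n : ℝ) * (1 + p)⌋₊ / n
        + e ⌊(n : ℝ) * (1 - q)⌋₊ ⌊(n : ℝ) * (1 + q)⌋₊ / n) / 2)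
      atTop (nhds ((g p + g q) / 2)) := ((hg p ⟨hp1, hp2⟩).add (hg q ⟨hq1, hq2⟩)).div_const 2
  refine le_of_tendsto_of_tendsto hpq hgr ?_
  filter_upwards [eventually_ge_atTop 1] with n hn
  have hn' : (0 : ℝ) < (n : ℝ) := by exact_mod_cast hn
  show (e ⌊(n : ℝ) * (1 - p)⌋₊ ⌊(n : ℝ) * (1 + p)⌋₊ / n
        + e ⌊(n : ℝ) * (1 - q)⌋₊ ⌊(n : ℝ) * (1 + q)⌋₊ / n) / 2
      ≤ e ⌊((2 * n : ℕ) : ℝ) * (1 - r)⌋₊ ⌊((2 * n : ℕ) : ℝ) * (1 + r)⌋₊ / ((2 * n : ℕ) : ℝ)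
  rw [← add_div, div_div]
  have hc : ((2 * n : ℕ) : ℝ) = (n : ℝ) * 2 := by push_cast; ring
  rw [show (e ⌊((2 * n : ℕ) : ℝ) * (1 - r)⌋₊ ⌊((2 * n : ℕ) : ℝ) * (1 + r)⌋₊ / ((2 * n : ℕ) : ℝ))
      = e ⌊((2 * n : ℕ) : ℝ) * (1 - r)⌋₊ ⌊((2 * n : ℕ) : ℝ) * (1 + r)⌋₊ / ((n : ℝ) * 2)
    from by rw [hc]]
  exact div_le_div_of_nonneg_right (key n) (by positivity) |>.trans_eq rfl
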